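/- Let φ be a one-variable first-order modal formula with counting quantifiers and let Q = (W,≺,q,I,{r_i}_{i∈I}) be a quasimodel for φ. Define the constant domain first-order Kripke model M = (W,≺,D,d,I') with D = I, d(w) = I for all w ∈ W, and I'(w,P) = {i ∈ I : P(x) ∈ r_i(w)} for every unary predicate P. Then for every w ∈ W, every i ∈ I, and every ψ ∈ sub(φ): M,w ⊨^i ψ if and only if ψ ∈ r_i(w). In particular, there exist w₀ ∈ W and i₀ ∈ I with M,w₀ ⊨^{i₀} φ, so φ is satisfiable with respect to QK. -/

import Mathlib

/-! Syntax of one-variable first-order modal formulas with counting quantifiers: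
    φ ::= P(x) | ¬φ | (φ∧φ) | ◇φ | ∃[≤c]x φ. -/

inductive Fml : Type
  | atom : ℕ → Fml
  | neg : Fml → Fml
  | conj : Fml → Fml → Fml
  | dia : Fml → Fml
  | countLe : ℕ → Fml → Fml
deriving DecidableEq

namespace Fml

/-- Subformulas. -/
def sub : Fml → Finset Fml
  | atom n => {atom n}
  | neg ψ => insert (neg ψ) ψ.sub
  | conj ψ χ => insert (conj ψ χ) (ψ.sub ∪ χ.sub)
  | dia ψ => insert (dia ψ) ψ.sub
  | countLe c ψ => insert (countLe c ψ) ψ.sub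

/-- Modal depth. -/
def md : Fml → ℕ
  | atom _ => 0
  | neg ψ => ψ.md
  | conj ψ χ => max ψ.md χ.md
  | dia ψ => ψ.md + 1
  | countLe _ ψ => ψ.md

/-- Capacity: the largest counting-quantifier subscript (0 if none). -/
def cpt : Fml → ℕ
  | atom _ => 0
  | neg ψ => ψ.cpt
  | conj ψ χ => max ψ.cpt χ.cpt
  | dia ψ => ψ.cpt
  | countLe c ψ => max c ψ.cpt

/-- Length of the formula as a string, counting subscripts written in binary. -/
def len : Fml → ℕ
  | atom _ => 1
  | neg ψ => ψ.len + 1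
  | conj ψ χ => ψ.len + χ.len + 1
  | dia ψ => ψ.len + 1
  | countLe c ψ => ψ.len + Nat.size c + 1

/-- Predicate symbols occurring in a formula. -/
def preds : Fml → Finset ℕ
  | atom n => {n}
  | neg ψ => ψ.preds
  | conj ψ χ => ψ.preds ∪ χ.preds
  | dia ψ => ψ.preds
  | countLe _ ψ => ψ.preds

def imp (ψ χ : Fml) : Fml := neg (conj ψ (neg χ))
def or (ψ χ : Fml) : Fml := neg (conj (neg ψ) (neg χ))
def iff (ψ χ : Fml) : Fml := conj (ψ.imp χ) (χ.imp ψ)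
def box (ψ : Fml) : Fml := neg (dia (neg ψ))
/-- `∃x ψ := ¬∃[≤0]x ψ`. -/
def ex (ψ : Fml) : Fml := neg (countLe 0 ψ)
/-- `∀x ψ := ∃[≤0]x ¬ψ`. -/
def fal (ψ : Fml) : Fml := countLe 0 (neg ψ)
/-- A tautology. -/
def top : Fml := neg (conj (atom 0) (neg (atom 0)))

/-- `boxIter n ψ` is `□^n ψ`. -/
def boxIter : ℕ → Fml → Fml
  | 0, ψ => ψ
  | n+1, ψ => (boxIter n ψ).box

/-- `boxLe m ψ` is `⋀_{k=0}^{m} □^k ψ`. -/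
def boxLe : ℕ → Fml → Fml
  | 0, ψ => ψ
  | n+1, ψ => conj (boxLe n ψ) (boxIter (n+1) ψ)

end Fml

/-- A first-order Kripke model `M = (W,R,D,d,I)` (unary predicates suffice for the
one-variable fragment). -/
structure KModel where
  W : Type
  R : W → W → Prop
  D : Type
  Dne : Nonempty D
  dom : W → Set D
  domNe : ∀ w, (dom w).Nonempty
  I : W → ℕ → Set D
  Isub : ∀ w p, I w p ⊆ dom w

/-- Satisfaction `M,w ⊨^a φ`. -/
def KModel.sat (M : KModel) : Fml → M.W → M.D → Prop
  | .atom p, w, a => a ∈ M.I w p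
  | .neg ψ, w, a => ¬ M.sat ψ w a
  | .conj ψ χ, w, a => M.sat ψ w a ∧ M.sat χ w a
  | .dia ψ, w, a => ∃ v, M.R w v ∧ M.sat ψ v a
  | .countLe c ψ, w, _ => {b | b ∈ M.dom w ∧ M.sat ψ w b}.encard ≤ (c : ℕ∞)

def KModel.constDom (M : KModel) : Prop := ∀ u v, M.dom u = M.dom v
def KModel.expDom (M : KModel) : Prop := ∀ u v, M.R u v → M.dom u ⊆ M.dom v
def KModel.decDom (M : KModel) : Prop := ∀ u v, M.R u v → M.dom v ⊆ M.dom u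

/-- Satisfiability with respect to QK (constant domains). -/
def satQK (φ : Fml) : Prop :=
  ∃ M : KModel, M.constDom ∧ ∃ w a, a ∈ M.dom w ∧ M.sat φ w a

/-- Satisfiability with respect to QK^exp (expanding domains). -/
def satQKexp (φ : Fml) : Prop :=
  ∃ M : KModel, M.expDom ∧ ∃ w a, a ∈ M.dom w ∧ M.sat φ w a

/-- Satisfiability with respect to QK^dec (decreasing domains). -/
def satQKdec (φ : Fml) : Prop :=
  ∃ M : KModel, M.decDom ∧ ∃ w a, a ∈ M.dom w ∧ M.sat φ w a

/-- `R` is the immediate-successor (parent–child) relation of a rooted irreflexive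
intransitive tree of depth ≤ m with root `r`. -/
def IsTreeOfDepth {W : Type} (R : W → W → Prop) (r : W) (m : ℕ) : Prop :=
  ∃ depth : W → ℕ,
    depth r = 0 ∧ (∀ w, depth w ≤ m) ∧
    (∀ u v, R u v → depth v = depth u + 1) ∧
    (∀ v, v ≠ r → ∃! u, R u v) ∧
    (∀ v, Relation.ReflTransGen R r v)

/-- A type for φ: a Boolean-saturated subset of sub(φ). -/
def IsType (φ : Fml) (t : Finset Fml) : Prop :=
  t ⊆ φ.sub ∧
  (∀ ψ, Fml.neg ψ ∈ φ.sub → (Fml.neg ψ ∈ t ↔ ψ ∉ t)) ∧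
  (∀ ψ χ, Fml.conj ψ χ ∈ φ.sub → (Fml.conj ψ χ ∈ t ↔ ψ ∈ t ∧ χ ∈ t))

/-- A quasistate for φ: a nonempty set of types with a multiplicity function
`μ : T → {1,…,cpt(φ)+1}` satisfying ∃[≤c]-saturation. -/
structure IsQuasistate (φ : Fml) (T : Finset (Finset Fml)) (μ : Finset Fml → ℕ) : Prop where
  nonempty : T.Nonempty
  types : ∀ t ∈ T, IsType φ t
  mu_pos : ∀ t ∈ T, 1 ≤ μ t
  mu_le : ∀ t ∈ T, μ t ≤ φ.cpt + 1
  count : ∀ t ∈ T, ∀ c ξ, Fml.countLe c ξ ∈ φ.sub →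
    (Fml.countLe c ξ ∈ t ↔ (T.filter (fun t' => ξ ∈ t')).sum μ ≤ c)

/-- `(W,≺,q,I,{r_i})` is a quasimodel for φ. -/
structure IsQuasimodel (φ : Fml) {W I : Type} (prec : W → W → Prop) (root : W)
    (T : W → Finset (Finset Fml)) (μ : W → Finset Fml → ℕ)
    (r : I → W → Finset Fml) : Prop where
  tree : IsTreeOfDepth prec root φ.md
  qs : ∀ w, IsQuasistate φ (T w) (μ w)
  ine : Nonempty I
  run : ∀ i w, r i w ∈ T w
  witness : ∃ w t, t ∈ T w ∧ φ ∈ t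
  coherence : ∀ i w v ξ, Fml.dia ξ ∈ φ.sub → prec w v → ξ ∈ r i v → Fml.dia ξ ∈ r i w
  saturation : ∀ i w ξ, Fml.dia ξ ∈ φ.sub → Fml.dia ξ ∈ r i w → ∃ v, prec w v ∧ ξ ∈ r i v
  mult : ∀ w t, t ∈ T w → (μ w t : ℕ∞) = min {i : I | r i w = t}.encard ((φ.cpt : ℕ∞) + 1)

/-- Bundled quasimodels for φ. -/
structure Quasimodel (φ : Fml) where
  W : Type
  I : Type
  prec : W → W → Prop
  root : W
  T : W → Finset (Finset Fml)
  μ : W → Finset Fml → ℕ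
  r : I → W → Finset Fml
  isQM : IsQuasimodel φ prec root T μ r

/-- The constant domain model induced by a quasimodel: `D = I`, `d(w) = I`,
`I'(w,P) = {i : P(x) ∈ r_i(w)}`. -/
def Quasimodel.toModel {φ : Fml} (Q : Quasimodel φ) : KModel where
  W := Q.W
  R := Q.prec
  D := Q.I
  Dne := Q.isQM.ine
  dom _ := Set.univ
  domNe _ := by haveI := Q.isQM.ine; exact Set.univ_nonempty
  I w p := {i | Fml.atom p ∈ Q.r i w}
  Isub _ _ := Set.subset_univ _

lemma Fml.mem_sub_self (φ : Fml) : φ ∈ φ.sub := by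
  cases φ <;> simp [Fml.sub]

lemma Fml.sub_sub : ∀ {φ ψ : Fml}, ψ ∈ φ.sub → ψ.sub ⊆ φ.sub := by
  intro φ
  induction φ with
  | atom n => intro ψ h; simp [Fml.sub] at h; subst h; simp [Fml.sub]
  | neg χ ih =>
    intro ψ h; simp only [Fml.sub, Finset.mem_insert] at h
    rcases h with h | h
    · subst h; exact Finset.Subset.refl _
    · exact (ih h).trans (Finset.subset_insert _ _)
  | conj χ₁ χ₂ ih₁ ih₂ =>
    intro ψ h; simp only [Fml.sub, Finset.mem_insert, Finset.mem_union] at h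
    rcases h with h | h | h
    · subst h; exact Finset.Subset.refl _
    · exact (ih₁ h).trans ((Finset.subset_union_left).trans (Finset.subset_insert _ _))
    · exact (ih₂ h).trans ((Finset.subset_union_right).trans (Finset.subset_insert _ _))
  | dia χ ih =>
    intro ψ h; simp only [Fml.sub, Finset.mem_insert] at h
    rcases h with h | h
    · subst h; exact Finset.Subset.refl _
    · exact (ih h).trans (Finset.subset_insert _ _)
  | countLe c χ ih =>
    intro ψ h; simp only [Fml.sub, Finset.mem_insert] at h
    rcases h with h | h
    · subst h; exact Finset.Subset.refl _
    · exact (ih h).trans (Finset.subset_insert _ _)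

lemma Fml.cpt_le_of_mem_sub : ∀ {φ ψ : Fml}, ψ ∈ φ.sub → ψ.cpt ≤ φ.cpt := by
  intro φ
  induction φ with
  | atom n => intro ψ h; simp [Fml.sub] at h; subst h; exact le_refl _
  | neg χ ih =>
    intro ψ h; simp only [Fml.sub, Finset.mem_insert] at h
    rcases h with h | h
    · subst h; exact le_refl _
    · exact ih h
  | conj χ₁ χ₂ ih₁ ih₂ =>
    intro ψ h; simp only [Fml.sub, Finset.mem_insert, Finset.mem_union] at h
    rcases h with h | h | h
    · subst h; exact le_refl _
    · exact (ih₁ h).trans (le_max_left _ _)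
    · exact (ih₂ h).trans (le_max_right _ _)
  | dia χ ih =>
    intro ψ h; simp only [Fml.sub, Finset.mem_insert] at h
    rcases h with h | h
    · subst h; exact le_refl _
    · exact ih h
  | countLe c χ ih =>
    intro ψ h; simp only [Fml.sub, Finset.mem_insert] at h
    rcases h with h | h
    · subst h; exact le_refl _
    · exact (ih h).trans (le_max_right _ _)

lemma encard_biUnion_of_disjoint {α β : Type*} (s : Finset α) (S : α → Set β)
    (hdisj : ∀ a ∈ s, ∀ b ∈ s, a ≠ b → Disjoint (S a) (S b)) :
    (⋃ a ∈ s, S a).encard = ∑ a ∈ s, (S a).encard := by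
  classical
  induction s using Finset.induction_on with
  | empty => simp
  | @insert a s ha ih =>
    rw [Finset.sum_insert ha, ← ih (fun x hx y hy hxy =>
      hdisj x (Finset.mem_insert_of_mem hx) y (Finset.mem_insert_of_mem hy) hxy)]
    rw [Finset.set_biUnion_insert, Set.encard_union_eq]
    rw [Set.disjoint_left]
    intro x hx hx'
    simp only [Set.mem_iUnion] at hx'
    obtain ⟨b, hb, hxb⟩ := hx'
    exact (Set.disjoint_left.mp (hdisj a (Finset.mem_insert_self a s) b
      (Finset.mem_insert_of_mem hb) (fun h => ha (h ▸ hb)))) hx hxb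

lemma min_eq_left_of_le_enat {e : ℕ∞} {C : ℕ} (h : min e ((C : ℕ∞) + 1) ≤ (C : ℕ∞)) :
    min e ((C : ℕ∞) + 1) = e := by
  have hC : (C : ℕ∞) < (C : ℕ∞) + 1 := by
    rw [← Nat.cast_one, ← Nat.cast_add, Nat.cast_lt]; omega
  rcases le_total e ((C : ℕ∞) + 1) with h' | h'
  · exact min_eq_left h'
  · exfalso
    rw [min_eq_right h'] at h
    exact absurd h (not_le.mpr hC)

/-- in the model induced by a quasimodel, truth coincides with membership in
the run, and consequently φ is satisfiable with respect to QK. -/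
theorem stmt_1 (φ : Fml) (Q : Quasimodel φ) :
    (∀ (w : Q.W) (i : Q.I) (ψ : Fml), ψ ∈ φ.sub →
      (Q.toModel.sat ψ w i ↔ ψ ∈ Q.r i w)) ∧
    (∃ (w₀ : Q.W) (i₀ : Q.I), Q.toModel.sat φ w₀ i₀) ∧
    satQK φ := by
  classical
  have qm := Q.isQM
  have htype : ∀ (i : Q.I) (w : Q.W), IsType φ (Q.r i w) :=
    fun i w => (qm.qs w).types _ (qm.run i w)
  -- the truth lemma
  have truth : ∀ (ψ : Fml), ψ ∈ φ.sub → ∀ (w : Q.W) (i : Q.I),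
      (Q.toModel.sat ψ w i ↔ ψ ∈ Q.r i w) := by
    intro ψ
    induction ψ with
    | atom p =>
      intro _ w i
      simp [KModel.sat, Quasimodel.toModel]
      exact Iff.rfl
    | neg χ ih =>
      intro hψ w i
      have hχ : χ ∈ φ.sub := Fml.sub_sub hψ (by
        simp only [Fml.sub]; exact Finset.mem_insert_of_mem χ.mem_sub_self)
      have := ((htype i w).2.1 χ hψ)
      simp only [KModel.sat, ih hχ w i, this]
    | conj χ₁ χ₂ ih₁ ih₂ =>
      intro hψ w i
      have hχ₁ : χ₁ ∈ φ.sub := Fml.sub_sub hψ (by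
        simp only [Fml.sub]
        exact Finset.mem_insert_of_mem (Finset.mem_union_left _ χ₁.mem_sub_self))
      have hχ₂ : χ₂ ∈ φ.sub := Fml.sub_sub hψ (by
        simp only [Fml.sub]
        exact Finset.mem_insert_of_mem (Finset.mem_union_right _ χ₂.mem_sub_self))
      have := ((htype i w).2.2 χ₁ χ₂ hψ)
      simp only [KModel.sat, ih₁ hχ₁ w i, ih₂ hχ₂ w i, this]
    | dia χ ih =>
      intro hψ w i
      have hχ : χ ∈ φ.sub := Fml.sub_sub hψ (by
        simp only [Fml.sub]; exact Finset.mem_insert_of_mem χ.mem_sub_self)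
      constructor
      · rintro ⟨v, hwv, hv⟩
        exact qm.coherence i w v χ hψ hwv ((ih hχ v i).mp hv)
      · intro h
        obtain ⟨v, hwv, hv⟩ := qm.saturation i w χ hψ h
        exact ⟨v, hwv, (ih hχ v i).mpr hv⟩
    | countLe c χ ih =>
      intro hψ w i
      have hχ : χ ∈ φ.sub := Fml.sub_sub hψ (by
        simp only [Fml.sub]; exact Finset.mem_insert_of_mem χ.mem_sub_self)
      have hcC : c ≤ φ.cpt := le_trans (le_max_left _ _) (Fml.cpt_le_of_mem_sub hψ)
      -- the set of individuals satisfying χ at w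
      have hset : {b : Q.I | b ∈ Q.toModel.dom w ∧ Q.toModel.sat χ w b}
          = {b : Q.I | χ ∈ Q.r b w} := by
        ext b
        constructor
        · rintro ⟨_, h⟩; exact (ih hχ w b).mp h
        · intro h; exact ⟨trivial, (ih hχ w b).mpr h⟩
      set F := (Q.T w).filter (fun t' => χ ∈ t') with hF
      set S : Finset Fml → Set Q.I := fun t => {b | Q.r b w = t} with hS
      have hdecomp : {b : Q.I | χ ∈ Q.r b w} = ⋃ t ∈ F, S t := by
        ext b
        simp only [Set.mem_setOf_eq, Set.mem_iUnion, hF, hS, Finset.mem_filter]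
        constructor
        · intro hb
          exact ⟨Q.r b w, ⟨qm.run b w, hb⟩, rfl⟩
        · rintro ⟨t, ⟨_, hχt⟩, rfl⟩
          exact hχt
      have hdisj : ∀ a ∈ F, ∀ b ∈ F, a ≠ b → Disjoint (S a) (S b) := by
        intro a _ b _ hab
        rw [Set.disjoint_left]
        rintro x (hx : Q.r x w = a) (hx' : Q.r x w = b)
        exact hab (hx ▸ hx')
      have hsum : {b : Q.I | χ ∈ Q.r b w}.encard = ∑ t ∈ F, (S t).encard := by
        rw [hdecomp]; exact encard_biUnion_of_disjoint F S hdisj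
      have hmult : ∀ t ∈ F, (Q.μ w t : ℕ∞) = min (S t).encard ((φ.cpt : ℕ∞) + 1) := by
        intro t ht
        exact qm.mult w t (Finset.mem_of_mem_filter t ht)
      have hcount := ((qm.qs w).count _ (qm.run i w) c χ hψ)
      have hmain : Q.toModel.sat (Fml.countLe c χ) w i ↔
          ({b : Q.I | χ ∈ Q.r b w}.encard ≤ (c : ℕ∞)) := by
        show ({b : Q.I | b ∈ Q.toModel.dom w ∧ Q.toModel.sat χ w b}.encard ≤ (c : ℕ∞)) ↔ _
        rw [hset]
      rw [hmain, hcount, ← hF, hsum]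
      -- now reduce to the numeric equivalence
      constructor
      · intro h
        have heach : ∀ t ∈ F, (S t).encard = (Q.μ w t : ℕ∞) := by
          intro t ht
          have h1 : (S t).encard ≤ (c : ℕ∞) :=
            le_trans (Finset.single_le_sum (f := fun t => (S t).encard)
              (fun _ _ => zero_le) ht) h
          have h2 : (S t).encard ≤ (φ.cpt : ℕ∞) := le_trans h1 (by exact_mod_cast hcC)
          rw [hmult t ht, min_eq_left (le_trans h2 (le_self_add))]
        have : (((F.sum (Q.μ w)) : ℕ) : ℕ∞) ≤ (c : ℕ∞) := by
          rw [Nat.cast_sum]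
          calc ∑ t ∈ F, ((Q.μ w t : ℕ) : ℕ∞) = ∑ t ∈ F, (S t).encard := by
                exact Finset.sum_congr rfl (fun t ht => (heach t ht).symm)
            _ ≤ (c : ℕ∞) := h
        exact_mod_cast this
      · intro h
        have heach : ∀ t ∈ F, (S t).encard = (Q.μ w t : ℕ∞) := by
          intro t ht
          have h1 : Q.μ w t ≤ c :=
            le_trans (Finset.single_le_sum (f := Q.μ w) (fun _ _ => Nat.zero_le _) ht) h
          have h2 : (Q.μ w t : ℕ∞) ≤ (φ.cpt : ℕ∞) := by
            exact_mod_cast le_trans h1 hcC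
          rw [hmult t ht] at h2 ⊢
          exact (min_eq_left_of_le_enat h2).symm
        calc ∑ t ∈ F, (S t).encard = (((F.sum (Q.μ w)) : ℕ) : ℕ∞) := by
              rw [Nat.cast_sum]
              exact Finset.sum_congr rfl (fun t ht => heach t ht)
          _ ≤ (c : ℕ∞) := by exact_mod_cast h
  refine ⟨fun w i ψ h => truth ψ h w i, ?_⟩
  -- a witness
  obtain ⟨w₀, t₀, ht₀, hφt₀⟩ := qm.witness
  have hmult := qm.mult w₀ t₀ ht₀
  have hpos : 1 ≤ Q.μ w₀ t₀ := (qm.qs w₀).mu_pos t₀ ht₀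
  have hne : {i : Q.I | Q.r i w₀ = t₀}.Nonempty := by
    rw [Set.nonempty_iff_ne_empty]
    intro hemp
    rw [hemp] at hmult
    simp at hmult
    omega
  obtain ⟨i₀, hi₀⟩ := hne
  have hsat : Q.toModel.sat φ w₀ i₀ :=
    (truth φ φ.mem_sub_self w₀ i₀).mpr (hi₀ ▸ hφt₀)
  exact ⟨⟨w₀, i₀, hsat⟩, Q.toModel, fun _ _ => rfl, w₀, i₀, Set.mem_univ _, hsat⟩
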